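/- Let $(s,t)\mapsto w(s,t)$ and $(s,t)\mapsto w_*(s,t)$ be controls, $\zeta>1$, $k:[0,T]\to\R_{\ge0}$, and $g:\Delta_T\to\R^d$ continuous with $|\delta g_{sut}| \le w(s,t)^{\zeta}(1+k_s)$ for all $s<u<t$ and $|g_{st}|\le w_*(s,t)^{\zeta}$. Then there is a universal constant $C=C(\zeta)$ such that $|g_{st}| \le C\,w(s,t)^{\zeta}\,(1+\sup_{r\in[s,t]}k_r)$ for all $s<t$. -/

import Mathlib

set_option maxHeartbeats 1000000

/-- A two-parameter function `w` is a control on `[0,T]`: continuous,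
vanishing on the diagonal, nonnegative and superadditive. -/
def IsControl (T : ℝ) (w : ℝ → ℝ → ℝ) : Prop :=
  Continuous (fun p : ℝ × ℝ => w p.1 p.2) ∧
  (∀ s, w s s = 0) ∧
  (∀ s t, 0 ≤ w s t) ∧
  (∀ s u t : ℝ, 0 ≤ s → s ≤ u → u ≤ t → t ≤ T → w s u + w u t ≤ w s t)

/-- A priori sewing estimate: if `|δg_{sut}| ≤ w(s,t)^ζ (1 + k_s)` and
`|g_{st}| ≤ w_*(s,t)^ζ` for controls `w, w_*` and `ζ > 1`, then there is a
universal constant `C = C(ζ)` with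
`|g_{st}| ≤ C w(s,t)^ζ (1 + sup_{r ∈ [s,t]} k_r)`. -/
theorem stmt_15 :
    ∀ ζ : ℝ, 1 < ζ → ∃ C : ℝ, 0 < C ∧
      ∀ (d : ℕ) (T : ℝ) (w wstar : ℝ → ℝ → ℝ) (k : ℝ → ℝ)
        (g : ℝ → ℝ → EuclideanSpace ℝ (Fin d)),
        0 < T →
        IsControl T w → IsControl T wstar →
        (∀ r, 0 ≤ k r) → BddAbove (k '' Set.Icc 0 T) →
        Continuous (fun p : ℝ × ℝ => g p.1 p.2) →
        (∀ s u t : ℝ, 0 ≤ s → s < u → u < t → t ≤ T →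
          ‖g s t - g u t - g s u‖ ≤ w s t ^ ζ * (1 + k s)) →
        (∀ s t : ℝ, 0 ≤ s → s < t → t ≤ T → ‖g s t‖ ≤ wstar s t ^ ζ) →
        ∀ s t : ℝ, 0 ≤ s → s < t → t ≤ T →
          ‖g s t‖ ≤ C * w s t ^ ζ * (1 + sSup (k '' Set.Icc s t)) := by
  intro ζ hζ
  have hζ0 : (0 : ℝ) < ζ := by linarith
  set r : ℝ := (2 : ℝ) ^ (1 - ζ) with hrdef
  have hr0 : 0 < r := Real.rpow_pos_of_pos (by norm_num) _
  have hr1 : r < 1 := Real.rpow_lt_one_of_one_lt_of_neg (by norm_num) (by linarith)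
  have h1r : (0:ℝ) < 1 - r := by linarith
  set C : ℝ := (1 - r)⁻¹ with hCdef
  have hC0 : 0 < C := by rw [hCdef]; exact inv_pos.mpr h1r
  have h2ζ : (0:ℝ) < (2:ℝ) ^ ζ := Real.rpow_pos_of_pos (by norm_num) _
  have hrval : r = 2 / (2:ℝ) ^ ζ := by
    rw [hrdef, Real.rpow_sub (by norm_num), Real.rpow_one]
  have hCrec : C = 1 + C * r := by
    have h1 : (1 - r) * C = 1 := by
      rw [hCdef]; exact mul_inv_cancel₀ (ne_of_gt h1r)
    nlinarith
  clear_value r C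
  refine ⟨C, hC0, ?_⟩
  intro d T w wstar k g hT hw hwstar hk hbdd hgcont hδ hgstar s t hs hst ht
  set K : ℝ := sSup (k '' Set.Icc s t) with hKdef
  have hbdd' : BddAbove (k '' Set.Icc s t) :=
    hbdd.mono (Set.image_mono (Set.Icc_subset_Icc hs ht))
  have hkK : ∀ a, s ≤ a → a ≤ t → k a ≤ K :=
    fun a h1 h2 => le_csSup hbdd' ⟨a, ⟨h1, h2⟩, rfl⟩
  clear_value K
  have hK0 : 0 ≤ K := le_trans (hk s) (hkK s le_rfl hst.le)
  have h1K : (0:ℝ) < 1 + K := by linarith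
  -- the key induction on dyadic level n
  have key : ∀ (ε η δ' : ℝ), 0 < ε → 0 < η → 0 ≤ δ' →
      (∀ a b, s ≤ a → a ≤ b → b ≤ t → b - a ≤ η → wstar a b ≤ δ') →
      ∀ n : ℕ, ∀ a b, s ≤ a → a < b → b ≤ t →
        w a b + ε * (b - a) ≤ ε * η * 2 ^ n →
        ‖g a b‖ ≤ C * (w a b + ε * (b - a)) ^ ζ * (1 + K)
          + δ' ^ (ζ - 1) * wstar a b := by
    intro ε η δ' hε hη hδ' H n
    induction n with
    | zero =>
      intro a b hsa hab hbt hsmall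
      have hwab0 : 0 ≤ w a b := hw.2.2.1 a b
      have hba : b - a ≤ η := by
        have h1 : ε * (b - a) ≤ ε * η := by
          simpa using le_trans (by linarith) hsmall
        exact le_of_mul_le_mul_left (by linarith) hε
      have hws : wstar a b ≤ δ' := H a b hsa hab.le hbt hba
      have hws0 : 0 ≤ wstar a b := hwstar.2.2.1 a b
      have hg : ‖g a b‖ ≤ wstar a b ^ ζ :=
        hgstar a b (le_trans hs hsa) hab (le_trans hbt ht)
      have hstep : wstar a b ^ ζ ≤ δ' ^ (ζ - 1) * wstar a b := by
        rcases eq_or_lt_of_le hws0 with h0 | h0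
        · rw [← h0, Real.zero_rpow (ne_of_gt hζ0)]
          simp
        · have hsplit : wstar a b ^ ζ = wstar a b ^ (ζ - 1) * wstar a b := by
            rw [← Real.rpow_add_one (ne_of_gt h0) (ζ - 1)]
            norm_num
          rw [hsplit]
          have h2 : wstar a b ^ (ζ - 1) ≤ δ' ^ (ζ - 1) :=
            Real.rpow_le_rpow hws0 hws (by linarith)
          nlinarith
      have hpos : 0 ≤ C * (w a b + ε * (b - a)) ^ ζ * (1 + K) := by
        have h3 : (0:ℝ) ≤ (w a b + ε * (b - a)) ^ ζ :=
          Real.rpow_nonneg (by nlinarith) _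
        positivity
      linarith only [hpos, le_trans hg hstep]
    | succ n IH =>
      intro a b hsa hab hbt hsmall
      have hwab0 : 0 ≤ w a b := hw.2.2.1 a b
      have hW0 : 0 < w a b + ε * (b - a) := by nlinarith
      -- find a balanced midpoint via the intermediate value theorem
      have hcont1 : Continuous (fun u : ℝ => w a u + ε * (u - a)) := by
        have h1 : Continuous (fun u : ℝ => w a u) :=
          hw.1.comp (continuous_const.prodMk continuous_id)
        fun_prop
      have hcont2 : Continuous (fun u : ℝ => w u b + ε * (b - u)) := by
        have h1 : Continuous (fun u : ℝ => w u b) :=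
          hw.1.comp (continuous_id.prodMk continuous_const)
        fun_prop
      have hIvt := intermediate_value_Icc
        (f := fun u : ℝ => (w a u + ε * (u - a)) - (w u b + ε * (b - u)))
        hab.le (hcont1.sub hcont2).continuousOn
      have h0mem : (0:ℝ) ∈ Set.Icc
          ((w a a + ε * (a - a)) - (w a b + ε * (b - a)))
          ((w a b + ε * (b - a)) - (w b b + ε * (b - b))) := by
        rw [hw.2.1 a, hw.2.1 b]
        constructor <;> simp <;> nlinarith
      obtain ⟨m, hm, hfm⟩ := hIvt h0mem
      have ham' : a ≤ m := hm.1
      have hmb' : m ≤ b := hm.2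
      have heq : w a m + ε * (m - a) = w m b + ε * (b - m) := by
        have h1 : (w a m + ε * (m - a)) - (w m b + ε * (b - m)) = 0 := hfm
        linarith
      have hsup : w a m + w m b ≤ w a b :=
        hw.2.2.2 a m b (le_trans hs hsa) ham' hmb' (le_trans hbt ht)
      have hwam0 : 0 ≤ w a m := hw.2.2.1 a m
      have hwmb0 : 0 ≤ w m b := hw.2.2.1 m b
      have hhalf : 2 * (w a m + ε * (m - a)) ≤ w a b + ε * (b - a) := by
        linarith only [heq, hsup]
      have ham : a < m := by
        rcases eq_or_lt_of_le ham' with h | h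
        · exfalso
          have h1 : w a a + ε * (a - a) = w m b + ε * (b - m) := by
            rw [h] at heq ⊢; exact heq
          rw [hw.2.1 a] at h1
          rw [← h] at h1
          nlinarith
        · exact h
      have hmb : m < b := by
        rcases eq_or_lt_of_le hmb' with h | h
        · exfalso
          have h1 : w a b + ε * (b - a) = w b b + ε * (b - b) := by
            rw [h] at heq; exact heq
          rw [hw.2.1 b] at h1
          nlinarith
        · exact h
      -- the two halves are small enough for the inductive hypothesis
      have hsmall1 : w a m + ε * (m - a) ≤ ε * η * 2 ^ n := by
        have h2 : (ε * η * 2 ^ (n+1)) = 2 * (ε * η * 2 ^ n) := by ring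
        nlinarith
      have hsmall2 : w m b + ε * (b - m) ≤ ε * η * 2 ^ n := by
        rw [← heq]; exact hsmall1
      have IH1 := IH a m hsa ham (le_trans hmb' hbt) hsmall1
      have IH2 := IH m b (le_trans hsa ham') hmb hbt hsmall2
      have hδg : ‖g a b - g m b - g a m‖ ≤ w a b ^ ζ * (1 + k a) :=
        hδ a m b (le_trans hs hsa) ham hmb (le_trans hbt ht)
      have htri : ‖g a b‖ ≤ ‖g a b - g m b - g a m‖ + ‖g a m‖ + ‖g m b‖ := by
        have h : g a b = (g a b - g m b - g a m) + g a m + g m b := by abel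
        calc ‖g a b‖ = ‖(g a b - g m b - g a m) + g a m + g m b‖ := by rw [← h]
        _ ≤ _ := norm_add₃_le
      -- rpow estimates
      have hx0 : 0 ≤ w a m + ε * (m - a) := by nlinarith
      have hy0 : 0 ≤ w m b + ε * (b - m) := by rw [← heq]; exact hx0
      have hxW : w a m + ε * (m - a) ≤ (w a b + ε * (b - a)) / 2 := by
        linarith only [hhalf]
      have hyW : w m b + ε * (b - m) ≤ (w a b + ε * (b - a)) / 2 := by
        rw [← heq]; exact hxW
      have hWζ0 : 0 ≤ (w a b + ε * (b - a)) ^ ζ := Real.rpow_nonneg hW0.le _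
      have hhalfpow : ((w a b + ε * (b - a)) / 2) ^ ζ
          = (w a b + ε * (b - a)) ^ ζ / 2 ^ ζ :=
        Real.div_rpow hW0.le (by norm_num : (0:ℝ) ≤ 2) ζ
      have hxζ : (w a m + ε * (m - a)) ^ ζ ≤ (w a b + ε * (b - a)) ^ ζ / 2 ^ ζ := by
        rw [← hhalfpow]; exact Real.rpow_le_rpow hx0 hxW hζ0.le
      have hyζ : (w m b + ε * (b - m)) ^ ζ ≤ (w a b + ε * (b - a)) ^ ζ / 2 ^ ζ := by
        rw [← hhalfpow]; exact Real.rpow_le_rpow hy0 hyW hζ0.le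
      have hwabζ : w a b ^ ζ ≤ (w a b + ε * (b - a)) ^ ζ :=
        Real.rpow_le_rpow hwab0 (by nlinarith) hζ0.le
      have hka : k a ≤ K := hkK a hsa (le_trans hab.le hbt)
      have hka0 : 0 ≤ k a := hk a
      have hwsup : wstar a m + wstar m b ≤ wstar a b :=
        hwstar.2.2.2 a m b (le_trans hs hsa) ham' hmb' (le_trans hbt ht)
      have hδζ0 : 0 ≤ δ' ^ (ζ - 1) := Real.rpow_nonneg hδ' _
      -- combine
      have main1 : w a b ^ ζ * (1 + k a) ≤ (w a b + ε * (b - a)) ^ ζ * (1 + K) :=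
        mul_le_mul hwabζ (by linarith) (by linarith) hWζ0
      have main2 : C * (w a m + ε * (m - a)) ^ ζ * (1 + K)
          ≤ C * ((w a b + ε * (b - a)) ^ ζ / 2 ^ ζ) * (1 + K) := by gcongr
      have main3 : C * (w m b + ε * (b - m)) ^ ζ * (1 + K)
          ≤ C * ((w a b + ε * (b - a)) ^ ζ / 2 ^ ζ) * (1 + K) := by gcongr
      have hCid : (w a b + ε * (b - a)) ^ ζ * (1 + K)
            + 2 * (C * ((w a b + ε * (b - a)) ^ ζ / 2 ^ ζ) * (1 + K))
          = C * (w a b + ε * (b - a)) ^ ζ * (1 + K) := by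
        have h2 : C * ((w a b + ε * (b - a)) ^ ζ / 2 ^ ζ)
            = C * r * (w a b + ε * (b - a)) ^ ζ / 2 := by
          rw [hrval]; field_simp
        rw [h2]
        calc (w a b + ε * (b - a)) ^ ζ * (1 + K)
              + 2 * (C * r * (w a b + ε * (b - a)) ^ ζ / 2 * (1 + K))
            = (1 + C * r) * ((w a b + ε * (b - a)) ^ ζ * (1 + K)) := by ring
        _ = C * ((w a b + ε * (b - a)) ^ ζ * (1 + K)) := by rw [← hCrec]
        _ = C * (w a b + ε * (b - a)) ^ ζ * (1 + K) := by ring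
      have hδpart : δ' ^ (ζ - 1) * wstar a m + δ' ^ (ζ - 1) * wstar m b
          ≤ δ' ^ (ζ - 1) * wstar a b := by
        have h3 := mul_le_mul_of_nonneg_left hwsup hδζ0
        rw [mul_add] at h3
        exact h3
      calc ‖g a b‖ ≤ ‖g a b - g m b - g a m‖ + ‖g a m‖ + ‖g m b‖ := htri
      _ ≤ w a b ^ ζ * (1 + k a)
          + (C * (w a m + ε * (m - a)) ^ ζ * (1 + K) + δ' ^ (ζ - 1) * wstar a m)
          + (C * (w m b + ε * (b - m)) ^ ζ * (1 + K) + δ' ^ (ζ - 1) * wstar m b) := by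
            exact add_le_add (add_le_add hδg IH1) IH2
      _ ≤ C * (w a b + ε * (b - a)) ^ ζ * (1 + K) + δ' ^ (ζ - 1) * wstar a b := by
            linarith only [main1, main2, main3, hCid, hδpart]
  -- modulus of continuity for `wstar` near the diagonal
  have hmod : ∀ δ' : ℝ, 0 < δ' → ∃ η : ℝ, 0 < η ∧
      ∀ a b, s ≤ a → a ≤ b → b ≤ t → b - a ≤ η → wstar a b ≤ δ' := by
    intro δ' hδ'0
    have hsq : IsCompact (Set.Icc (0:ℝ) T ×ˢ Set.Icc (0:ℝ) T) :=
      isCompact_Icc.prod isCompact_Icc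
    have hUC : UniformContinuousOn (fun p : ℝ × ℝ => wstar p.1 p.2)
        (Set.Icc 0 T ×ˢ Set.Icc 0 T) :=
      hsq.uniformContinuousOn_of_continuous hwstar.1.continuousOn
    obtain ⟨η, hη0, hmain⟩ := Metric.uniformContinuousOn_iff_le.mp hUC δ' hδ'0
    refine ⟨η, hη0, ?_⟩
    intro a b h1 h2 h3 h4
    have ha0 : (0:ℝ) ≤ a := le_trans hs h1
    have hbT : b ≤ T := le_trans h3 ht
    have hmem1 : ((a,b) : ℝ×ℝ) ∈ Set.Icc (0:ℝ) T ×ˢ Set.Icc (0:ℝ) T :=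
      ⟨⟨ha0, le_trans h2 hbT⟩, ⟨le_trans ha0 h2, hbT⟩⟩
    have hmem2 : ((a,a) : ℝ×ℝ) ∈ Set.Icc (0:ℝ) T ×ˢ Set.Icc (0:ℝ) T :=
      ⟨⟨ha0, le_trans h2 hbT⟩, ⟨ha0, le_trans h2 hbT⟩⟩
    have hd : dist ((a,b) : ℝ×ℝ) ((a,a) : ℝ×ℝ) ≤ η := by
      rw [Prod.dist_eq]
      have hd1 : dist a a = 0 := dist_self a
      have hd2 : dist b a = b - a := by
        rw [Real.dist_eq, abs_of_nonneg (by linarith)]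
      rw [hd1, hd2]
      exact max_le hη0.le h4
    have hfin := hmain (a,b) hmem1 (a,a) hmem2 hd
    simp only [Real.dist_eq] at hfin
    rw [hwstar.2.1 a] at hfin
    calc wstar a b ≤ |wstar a b - 0| := by rw [sub_zero]; exact le_abs_self _
    _ ≤ δ' := hfin
  -- conclusion, up to an arbitrary δ > 0
  refine le_of_forall_pos_le_add ?_
  intro δ hδpos
  have hwst0 : 0 ≤ wstar s t := hwstar.2.2.1 s t
  -- choose δ' with δ'^(ζ-1) * wstar s t ≤ δ/2
  have hδ'ex : ∃ δ' : ℝ, 0 < δ' ∧ δ' ^ (ζ - 1) * wstar s t ≤ δ / 2 := by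
    rcases eq_or_lt_of_le hwst0 with h0 | h0
    · exact ⟨1, one_pos, by rw [← h0, mul_zero]; positivity⟩
    · refine ⟨(δ / (2 * wstar s t)) ^ (1 / (ζ - 1)), ?_, ?_⟩
      · exact Real.rpow_pos_of_pos (by positivity) _
      · have hbase : (0:ℝ) ≤ δ / (2 * wstar s t) := by positivity
        have hpow : ((δ / (2 * wstar s t)) ^ (1 / (ζ - 1))) ^ (ζ - 1)
            = δ / (2 * wstar s t) := by
          rw [← Real.rpow_mul hbase, one_div,
            inv_mul_cancel₀ (by linarith : ζ - 1 ≠ 0), Real.rpow_one]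
        rw [hpow, div_mul_eq_mul_div, div_le_div_iff₀ (by positivity) (by norm_num)]
        ring_nf
        nlinarith
  obtain ⟨δ', hδ'0, hδ'le⟩ := hδ'ex
  obtain ⟨η, hη0, H⟩ := hmod δ' hδ'0
  -- choose ε small by continuity of the rpow expression
  have hF : ContinuousAt (fun x : ℝ => C * (w s t + x * (t - s)) ^ ζ * (1 + K)) 0 := by
    have h1 : ContinuousAt (fun x : ℝ => w s t + x * (t - s)) 0 := by fun_prop
    exact (continuousAt_const.mul (h1.rpow_const (Or.inr hζ0.le))).mul continuousAt_const
  have hev : ∀ᶠ x in nhds (0:ℝ),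
      C * (w s t + x * (t - s)) ^ ζ * (1 + K) < C * w s t ^ ζ * (1 + K) + δ / 2 := by
    have h3 := hF.tendsto
    simp only [zero_mul, add_zero] at h3
    exact h3 (Iio_mem_nhds (by linarith))
  obtain ⟨ρ, hρ0, hρ⟩ := Metric.eventually_nhds_iff.mp hev
  set ε : ℝ := ρ / 2 with hεdef
  have hε0 : 0 < ε := by positivity
  have hεlt : C * (w s t + ε * (t - s)) ^ ζ * (1 + K)
      < C * w s t ^ ζ * (1 + K) + δ / 2 := by
    apply hρ
    rw [Real.dist_eq, sub_zero, abs_of_pos hε0]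
    rw [hεdef]; linarith
  -- choose n large
  obtain ⟨n, hn⟩ := pow_unbounded_of_one_lt
    ((w s t + ε * (t - s)) / (ε * η)) (by norm_num : (1:ℝ) < 2)
  have hsmall : w s t + ε * (t - s) ≤ ε * η * 2 ^ n := by
    have h4 : (0:ℝ) < ε * η := by positivity
    have h5 := (div_lt_iff₀ h4).mp hn
    nlinarith
  have hkey := key ε η δ' hε0 hη0 hδ'0.le H n s t le_rfl hst le_rfl hsmall
  calc ‖g s t‖ ≤ C * (w s t + ε * (t - s)) ^ ζ * (1 + K) + δ' ^ (ζ - 1) * wstar s t :=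
        hkey
  _ ≤ (C * w s t ^ ζ * (1 + K) + δ / 2) + δ / 2 := by
        linarith only [hεlt, hδ'le]
  _ = C * w s t ^ ζ * (1 + K) + δ := by ring
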